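/- Let Γ be a connected highly-regular graph. Then the index of Γ equals diam(Γ) + 1 if and only if Γ is a distance-regular graph. -/

import Mathlib

/-- A partition of the vertex set (encoded as a cell-assignment map `P : V → Fin m`)
witnessing that `C` is a collapsed adjacency matrix at the vertex `u`:
the cell of index `0` is exactly `{u}`, every cell is nonempty, and every vertex in
cell `j` has exactly `C i j` neighbours in cell `i`. -/
def IsWitnessingPartition {V : Type*} [Fintype V] (G : SimpleGraph V) {m : ℕ}
    (C : Fin m → Fin m → ℕ) (u : V) (P : V → Fin m) : Prop :=
  (∀ v : V, (P v : ℕ) = 0 ↔ v = u) ∧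
  (∀ t : Fin m, ∃ v : V, P v = t) ∧
  (∀ (i j : Fin m) (y : V), P y = j → {z : V | P z = i ∧ G.Adj y z}.ncard = C i j)

/-- `C` is a collapsed adjacency matrix (CAM) of size `m` for `G`: `2 ≤ m`, `m < n`
(with `m = n` allowed only when `n = 2`), and every vertex admits a witnessing partition. -/
def IsCAM {V : Type*} [Fintype V] (G : SimpleGraph V) {m : ℕ}
    (C : Fin m → Fin m → ℕ) : Prop :=
  2 ≤ m ∧ (m < Fintype.card V ∨ (m = Fintype.card V ∧ Fintype.card V = 2)) ∧
  ∀ u : V, ∃ P : V → Fin m, IsWitnessingPartition G C u P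

/-- A graph is highly-regular if it admits some CAM. -/
def IsHighlyRegular {V : Type*} [Fintype V] (G : SimpleGraph V) : Prop :=
  ∃ (m : ℕ) (C : Fin m → Fin m → ℕ), IsCAM G C

/-- The index of a highly-regular graph: the least size of a CAM. -/
noncomputable def hrIndex {V : Type*} [Fintype V] (G : SimpleGraph V) : ℕ :=
  sInf {m : ℕ | ∃ C : Fin m → Fin m → ℕ, IsCAM G C}

/-- A connected graph is distance-regular if the numbers `|D_1(v) ∩ D_{i-1}(u)|`,
`|D_1(v) ∩ D_i(u)|`, `|D_1(v) ∩ D_{i+1}(u)|` depend only on `i = d(u,v)`. -/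
def IsDistanceRegular {V : Type*} [Fintype V] (G : SimpleGraph V) : Prop :=
  G.Connected ∧ ∀ i : ℕ, 1 ≤ i → i ≤ G.diam →
    ∀ j : ℕ, j = i - 1 ∨ j = i ∨ j = i + 1 →
    ∀ u v x y : V, G.dist u v = i → G.dist x y = i →
      {w : V | G.Adj v w ∧ G.dist u w = j}.ncard =
      {w : V | G.Adj y w ∧ G.dist x w = j}.ncard



open SimpleGraph

section Aux

variable {V : Type*} {G : SimpleGraph V}

lemma my_edist_coe_dist {u v : V} (h : G.Reachable u v) :
    G.edist u v = (G.dist u v : ℕ∞) :=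
  (ENat.coe_toNat (SimpleGraph.edist_ne_top_iff_reachable.mpr h)).symm

lemma my_edist_step {u v : V} {k : ℕ} (h : G.edist u v = ((k + 1 : ℕ) : ℕ∞)) :
    ∃ w, G.Adj v w ∧ G.edist u w = (k : ℕ∞) := by
  have hvu : G.edist v u = ((k + 1 : ℕ) : ℕ∞) := by rw [SimpleGraph.edist_comm]; exact h
  obtain ⟨p, hp⟩ := SimpleGraph.exists_walk_of_edist_eq_coe hvu
  cases p with
  | nil => simp at hp
  | @cons _ w _ hadj q =>
    refine ⟨w, hadj, ?_⟩
    have hq : q.length = k := by simpa using hp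
    have h1 : G.edist w u ≤ (k : ℕ∞) := by
      have := SimpleGraph.edist_le q
      rwa [hq] at this
    have tri : G.edist v u ≤ G.edist v w + G.edist w u := SimpleGraph.edist_triangle
    rw [hvu, SimpleGraph.edist_eq_one_iff_adj.mpr hadj] at tri
    have hne : G.edist w u ≠ ⊤ := (lt_of_le_of_lt h1 (ENat.coe_lt_top k)).ne
    lift G.edist w u to ℕ using hne with l hl
    have h2 : l ≤ k := by exact_mod_cast h1
    have h3 : (k + 1 : ℕ) ≤ 1 + l := by
      have : ((k+1 : ℕ) : ℕ∞) ≤ ((1 + l : ℕ) : ℕ∞) := by push_cast; exact tri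
      exact_mod_cast this
    have : l = k := by omega
    rw [SimpleGraph.edist_comm, ← hl, this]

lemma my_dist_step (h : G.Reachable u v) {k : ℕ} (hd : G.dist u v = k + 1) :
    ∃ w, G.Adj v w ∧ G.dist u w = k := by
  have he : G.edist u v = ((k + 1 : ℕ) : ℕ∞) := by rw [my_edist_coe_dist h, hd]
  obtain ⟨w, hw, hwe⟩ := my_edist_step he
  refine ⟨w, hw, ?_⟩
  have : G.dist u w = (G.edist u w).toNat := rfl
  rw [this, hwe]; simp

lemma my_exists_dist_eq_of_le (hconn : G.Connected) {u v : V} {k : ℕ}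
    (hk : k ≤ G.dist u v) : ∃ w, G.dist u w = k := by
  suffices H : ∀ n, ∀ v : V, G.dist u v = n → ∀ k ≤ n, ∃ w, G.dist u w = k from
    H _ v rfl k hk
  intro n
  induction n with
  | zero =>
    intro v _ k hk
    have : k = 0 := by omega
    exact ⟨u, by rw [this]; exact SimpleGraph.dist_self⟩
  | succ n ih =>
    intro v hv k hk
    rcases Nat.lt_or_ge k (n + 1) with h | h
    · obtain ⟨w, _, hw⟩ := my_dist_step (hconn u v) hv
      exact ih w hw k (by omega)
    · exact ⟨v, by rw [hv]; omega⟩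

end Aux

lemma my_ediam_ne_top {V : Type*} [Fintype V] {G : SimpleGraph V} (hconn : G.Connected) :
    G.ediam ≠ ⊤ := by
  haveI : Nonempty V := hconn.nonempty
  obtain ⟨u, v, h⟩ := SimpleGraph.exists_edist_eq_ediam_of_finite (G := G)
  rw [← h]
  exact SimpleGraph.edist_ne_top_iff_reachable.mpr (hconn u v)

section QG

/-- The quotient graph of a CAM. -/
def myQG {m : ℕ} (C : Fin m → Fin m → ℕ) : SimpleGraph (Fin m) where
  Adj i j := i ≠ j ∧ (C i j ≠ 0 ∨ C j i ≠ 0)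
  symm := by
    constructor
    intro i j h
    exact ⟨h.1.symm, h.2.symm⟩
  loopless := by
    constructor
    intro i h
    exact h.1 rfl

variable {V : Type*} [Fintype V] {G : SimpleGraph V} {m : ℕ} {C : Fin m → Fin m → ℕ}
  {u : V} {P : V → Fin m}

lemma my_cell_zero [NeZero m] (hW : IsWitnessingPartition G C u P) (v : V) :
    P v = 0 ↔ v = u := by
  rw [← hW.1 v]
  constructor
  · intro h; simp [h]
  · intro h; exact Fin.ext (by simpa using h)

lemma my_adj_support (hW : IsWitnessingPartition G C u P) {y z : V} (hadj : G.Adj y z) :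
    C (P y) (P z) ≠ 0 := by
  have hc := hW.2.2 (P y) (P z) z rfl
  rw [← hc]
  have hne : ({w : V | P w = P y ∧ G.Adj z w}).Nonempty := ⟨y, rfl, hadj.symm⟩
  exact ((Set.ncard_pos (Set.toFinite _)).mpr hne).ne'

lemma my_exists_nbr (hW : IsWitnessingPartition G C u P) {i j : Fin m} (hij : C i j ≠ 0)
    {y : V} (hy : P y = j) : ∃ z, P z = i ∧ G.Adj y z := by
  have hc := hW.2.2 i j y hy
  have h2 : {z : V | P z = i ∧ G.Adj y z}.ncard ≠ 0 := by rw [hc]; exact hij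
  exact Set.nonempty_of_ncard_ne_zero h2

lemma my_support_symm (hW : IsWitnessingPartition G C u P) {i j : Fin m} (hij : C i j ≠ 0) :
    C j i ≠ 0 := by
  obtain ⟨y, hy⟩ := hW.2.1 j
  obtain ⟨z, hz, hadj⟩ := my_exists_nbr hW hij hy
  have := my_adj_support hW hadj
  rwa [hy, hz] at this

lemma my_edist_eq [NeZero m] (hconn : G.Connected)
    (hW : IsWitnessingPartition G C u P) (v : V) :
    (myQG C).edist 0 (P v) = (G.dist u v : ℕ∞) := by
  have claim1 : ∀ k : ℕ, ∀ v : V, G.dist u v = k → (myQG C).edist 0 (P v) ≤ (k : ℕ∞) := by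
    intro k
    induction k with
    | zero =>
      intro v hv
      have hvu : v = u := ((hconn.dist_eq_zero_iff).mp hv).symm
      rw [(my_cell_zero hW v).mpr hvu]
      simp
    | succ k ih =>
      intro v hv
      obtain ⟨w, hadj, hw⟩ := my_dist_step (hconn u v) hv
      have hle := ih w hw
      by_cases hpw : P w = P v
      · rw [← hpw]
        exact hle.trans (by exact_mod_cast Nat.le_succ k)
      · have hQ : (myQG C).Adj (P w) (P v) := ⟨hpw, Or.inr (my_adj_support hW hadj)⟩
        have tri : (myQG C).edist 0 (P v) ≤ (myQG C).edist 0 (P w) + (myQG C).edist (P w) (P v) :=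
          SimpleGraph.edist_triangle
        rw [SimpleGraph.edist_eq_one_iff_adj.mpr hQ] at tri
        refine tri.trans ?_
        have : ((k + 1 : ℕ) : ℕ∞) = (k : ℕ∞) + 1 := by push_cast; ring
        rw [this]
        exact add_le_add hle le_rfl
  have claim2 : ∀ k : ℕ, ∀ j : Fin m, (myQG C).edist 0 j = (k : ℕ∞) →
      ∀ v : V, P v = j → G.dist u v ≤ k := by
    intro k
    induction k with
    | zero =>
      intro j hj v hv
      have hj0 : (0 : Fin m) = j := SimpleGraph.edist_eq_zero_iff.mp (by exact_mod_cast hj)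
      have hvu : v = u := (my_cell_zero hW v).mp (hv.trans hj0.symm)
      rw [hvu]
      simp [SimpleGraph.dist_self]
    | succ k ih =>
      intro j hj v hv
      obtain ⟨i, hQadj, hie⟩ := my_edist_step hj
      have hCij : C i j ≠ 0 := by
        rcases hQadj.2 with h | h
        · exact my_support_symm hW h
        · exact h
      obtain ⟨z, hz, hadjz⟩ := my_exists_nbr hW hCij hv
      have hdz : G.dist u z ≤ k := ih i hie z hz
      have tri : G.dist u v ≤ G.dist u z + G.dist z v := hconn.dist_triangle
      have h1 : G.dist z v = 1 := SimpleGraph.dist_eq_one_iff_adj.mpr hadjz.symm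
      omega
  have h1 := claim1 (G.dist u v) v rfl
  have hne : (myQG C).edist 0 (P v) ≠ ⊤ := (lt_of_le_of_lt h1 (ENat.coe_lt_top _)).ne
  lift (myQG C).edist 0 (P v) to ℕ using hne with l hl
  have h2 : G.dist u v ≤ l := claim2 l (P v) hl.symm v rfl
  have h3 : l ≤ G.dist u v := by exact_mod_cast h1
  exact_mod_cast congrArg (Nat.cast : ℕ → ℕ∞) (le_antisymm h2 h3).symm

end QG

section Global

variable {V : Type*} [Fintype V] {G : SimpleGraph V} {m : ℕ} {C : Fin m → Fin m → ℕ}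

lemma my_sphere_nonempty (hconn : G.Connected) (hC : IsCAM G C) (u : V) {k : ℕ}
    (hk : k ≤ G.diam) : ∃ v, G.dist u v = k := by
  haveI : Nonempty V := hconn.nonempty
  haveI : NeZero m := ⟨by have := hC.1; omega⟩
  obtain ⟨x, y, hxy⟩ := SimpleGraph.exists_dist_eq_diam (G := G)
  obtain ⟨Px, hPx⟩ := hC.2.2 x
  have hdj : (myQG C).edist 0 (Px y) = (G.diam : ℕ∞) := by
    rw [my_edist_eq hconn hPx y, hxy]
  obtain ⟨Pu, hPu⟩ := hC.2.2 u
  obtain ⟨v, hv⟩ := hPu.2.1 (Px y)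
  have : ((G.dist u v : ℕ) : ℕ∞) = (G.diam : ℕ∞) := by
    rw [← my_edist_eq hconn hPu v, hv, hdj]
  have hdv : G.dist u v = G.diam := by exact_mod_cast this
  exact my_exists_dist_eq_of_le hconn (by omega : k ≤ G.dist u v)

lemma my_card_lower (hconn : G.Connected) (hC : IsCAM G C) : G.diam + 1 ≤ m := by
  haveI : Nonempty V := hconn.nonempty
  haveI : NeZero m := ⟨by have := hC.1; omega⟩
  obtain ⟨u⟩ := (inferInstance : Nonempty V)
  obtain ⟨P, hP⟩ := hC.2.2 u
  have h : ∀ k : Fin (G.diam + 1), ∃ v, G.dist u v = (k : ℕ) := fun k =>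
    my_sphere_nonempty hconn hC u (by omega : (k : ℕ) ≤ G.diam)
  choose vf hvf using h
  have hinj : Function.Injective (fun k : Fin (G.diam + 1) => P (vf k)) := by
    intro k k' hkk
    have e1 : (myQG C).edist 0 (P (vf k)) = ((k : ℕ) : ℕ∞) := by
      rw [my_edist_eq hconn hP, hvf k]
    have e2 : (myQG C).edist 0 (P (vf k')) = ((k' : ℕ) : ℕ∞) := by
      rw [my_edist_eq hconn hP, hvf k']
    simp only at hkk
    rw [hkk, e2] at e1
    exact Fin.ext (by exact_mod_cast e1.symm)
  simpa using Fintype.card_le_of_injective _ hinj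

lemma my_DR_of_CAM (hconn : G.Connected) {C : Fin (G.diam + 1) → Fin (G.diam + 1) → ℕ}
    (hC : IsCAM G C) : IsDistanceRegular G := by
  haveI : Nonempty V := hconn.nonempty
  have hnetop : G.ediam ≠ ⊤ := my_ediam_ne_top hconn
  -- the unique cell at each distance
  have h : ∀ k : Fin (G.diam + 1), ∃ j : Fin (G.diam + 1), (myQG C).edist 0 j = ((k : ℕ) : ℕ∞) := by
    intro k
    obtain ⟨u0⟩ := (inferInstance : Nonempty V)
    obtain ⟨P0, hP0⟩ := hC.2.2 u0
    obtain ⟨v, hv⟩ := my_sphere_nonempty hconn hC u0 (by omega : (k : ℕ) ≤ G.diam)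
    exact ⟨P0 v, by rw [my_edist_eq hconn hP0 v, hv]⟩
  choose σ hσ using h
  have hσinj : Function.Injective σ := by
    intro k k' hkk
    have := hσ k
    rw [hkk, hσ k'] at this
    exact Fin.ext (by exact_mod_cast this.symm)
  have hσsurj : Function.Surjective σ := Finite.surjective_of_injective hσinj
  have hδinj : ∀ j j' : Fin (G.diam + 1),
      (myQG C).edist 0 j = (myQG C).edist 0 j' → j = j' := by
    intro j j' hjj
    obtain ⟨k, rfl⟩ := hσsurj j
    obtain ⟨k', rfl⟩ := hσsurj j'
    rw [hσ k, hσ k'] at hjj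
    have hkk : (k : ℕ) = (k' : ℕ) := by exact_mod_cast hjj
    rw [show k = k' from Fin.ext hkk]
  -- key correspondence
  have key : ∀ (u : V) (P : V → Fin (G.diam + 1)), IsWitnessingPartition G C u P →
      ∀ (w : V) (k : ℕ) (hk : k < G.diam + 1), (G.dist u w = k ↔ P w = σ ⟨k, hk⟩) := by
    intro u P hP w k hk
    constructor
    · intro hw
      apply hδinj
      rw [my_edist_eq hconn hP w, hσ ⟨k, hk⟩, hw]
    · intro hw
      have := my_edist_eq hconn hP w
      rw [hw, hσ ⟨k, hk⟩] at this
      exact_mod_cast this.symm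
  refine ⟨hconn, ?_⟩
  intro i hi1 hiD j hj u v x y huv hxy
  obtain ⟨Pu, hPu⟩ := hC.2.2 u
  obtain ⟨Px, hPx⟩ := hC.2.2 x
  have hiD' : i < G.diam + 1 := by omega
  by_cases hjD : j < G.diam + 1
  · have hset : ∀ (a b : V) (Pa : V → Fin (G.diam + 1)), IsWitnessingPartition G C a Pa →
        G.dist a b = i →
        {w : V | G.Adj b w ∧ G.dist a w = j}.ncard = C (σ ⟨j, hjD⟩) (σ ⟨i, hiD'⟩) := by
      intro a b Pa hPa hab
      have hPab : Pa b = σ ⟨i, hiD'⟩ := (key a Pa hPa b i hiD').mp hab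
      have hseteq : {w : V | G.Adj b w ∧ G.dist a w = j} =
          {w : V | Pa w = σ ⟨j, hjD⟩ ∧ G.Adj b w} := by
        ext w
        simp only [Set.mem_setOf_eq]
        rw [key a Pa hPa w j hjD]
        tauto
      rw [hseteq, hPa.2.2 (σ ⟨j, hjD⟩) (Pa b) b rfl, hPab]
    rw [hset u v Pu hPu huv, hset x y Px hPx hxy]
  · have hempty : ∀ (a b : V), {w : V | G.Adj b w ∧ G.dist a w = j} = ∅ := by
      intro a b
      ext w
      simp only [Set.mem_setOf_eq, Set.mem_empty_iff_false, iff_false, not_and]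
      intro _
      have := SimpleGraph.dist_le_diam (G := G) hnetop (u := a) (v := w)
      omega
    rw [hempty u v, hempty x y]

end Global

section Backward

variable {V : Type*} [Fintype V] {G : SimpleGraph V}

lemma my_diam_pos (hconn : G.Connected) (hnt : Nontrivial V) : 1 ≤ G.diam := by
  have hnetop := my_ediam_ne_top hconn
  rcases Nat.eq_zero_or_pos G.diam with h0 | h
  · rcases SimpleGraph.diam_eq_zero.mp h0 with h | h
    · exact absurd h hnetop
    · exact absurd hnt (not_nontrivial_iff_subsingleton.mpr h)
  · omega

omit [Fintype V] in
lemma my_has_nbr (hconn : G.Connected) (hnt : Nontrivial V) (a : V) : ∃ b, G.Adj a b := by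
  obtain ⟨b, hb⟩ := exists_ne a
  have h1 : 0 < G.dist a b := hconn.pos_dist_of_ne (Ne.symm hb)
  obtain ⟨z, hz⟩ := my_exists_dist_eq_of_le hconn (show 1 ≤ G.dist a b by omega)
  exact ⟨z, SimpleGraph.dist_eq_one_iff_adj.mp hz⟩

lemma my_regular (hconn : G.Connected) (hnt : Nontrivial V) (hdr : IsDistanceRegular G)
    (v w : V) : {z | G.Adj v z}.ncard = {z | G.Adj w z}.ncard := by
  have hdiam1 : 1 ≤ G.diam := my_diam_pos hconn hnt
  have claim : ∀ a b a' b' : V, G.Adj a b → G.Adj a' b' →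
      {z | G.Adj b z}.ncard = {z | G.Adj b' z}.ncard := by
    intro a b a' b' hab hab'
    have hcnt : ∀ j : ℕ, (j = 0 ∨ j = 1 ∨ j = 2) → ∀ (c d : V), G.Adj c d →
        {z | G.Adj d z ∧ G.dist c z = j}.ncard =
        {z | G.Adj b' z ∧ G.dist a' z = j}.ncard := by
      intro j hj c d hcd
      exact hdr.2 1 le_rfl hdiam1 j (by omega) c d a' b'
        (SimpleGraph.dist_eq_one_iff_adj.mpr hcd) (SimpleGraph.dist_eq_one_iff_adj.mpr hab')
    have hsplit : ∀ (c d : V), G.Adj c d → {z | G.Adj d z}.ncard =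
        {z | G.Adj d z ∧ G.dist c z = 0}.ncard + {z | G.Adj d z ∧ G.dist c z = 1}.ncard
          + {z | G.Adj d z ∧ G.dist c z = 2}.ncard := by
      intro c d hcd
      have hU : {z | G.Adj d z} =
          ({z | G.Adj d z ∧ G.dist c z = 0} ∪ {z | G.Adj d z ∧ G.dist c z = 1})
            ∪ {z | G.Adj d z ∧ G.dist c z = 2} := by
        ext z
        simp only [Set.mem_setOf_eq, Set.mem_union]
        constructor
        · intro h
          have h1 : G.dist c z ≤ G.dist c d + G.dist d z := hconn.dist_triangle
          have h2 : G.dist c d = 1 := SimpleGraph.dist_eq_one_iff_adj.mpr hcd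
          have h3 : G.dist d z = 1 := SimpleGraph.dist_eq_one_iff_adj.mpr h
          have h4 : G.dist c z = 0 ∨ G.dist c z = 1 ∨ G.dist c z = 2 := by omega
          tauto
        · tauto
      have hd01 : Disjoint {z | G.Adj d z ∧ G.dist c z = 0} {z | G.Adj d z ∧ G.dist c z = 1} := by
        rw [Set.disjoint_left]
        rintro z ⟨_, h0⟩ ⟨_, h1⟩
        omega
      have hd2 : Disjoint ({z | G.Adj d z ∧ G.dist c z = 0} ∪ {z | G.Adj d z ∧ G.dist c z = 1})
          {z | G.Adj d z ∧ G.dist c z = 2} := by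
        rw [Set.disjoint_left]
        rintro z (⟨_, h0⟩ | ⟨_, h1⟩) ⟨_, h2⟩ <;> omega
      rw [hU, Set.ncard_union_eq hd2 (Set.toFinite _) (Set.toFinite _),
        Set.ncard_union_eq hd01 (Set.toFinite _) (Set.toFinite _)]
    rw [hsplit a b hab, hsplit a' b' hab']
    rw [hcnt 0 (by omega) a b hab, hcnt 1 (by omega) a b hab, hcnt 2 (by omega) a b hab]
  obtain ⟨v', hv'⟩ := my_has_nbr hconn hnt v
  obtain ⟨w', hw'⟩ := my_has_nbr hconn hnt w
  exact claim v' v w' w hv'.symm hw'.symm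

lemma my_ecc (hconn : G.Connected) (hnt : Nontrivial V) (hdr : IsDistanceRegular G)
    (u : V) {k : ℕ} (hk : k ≤ G.diam) : ∃ v, G.dist u v = k := by
  haveI : Nonempty V := hconn.nonempty
  have hnetop := my_ediam_ne_top hconn
  obtain ⟨v0, -, hmax⟩ := Finset.exists_max_image Finset.univ (fun v => G.dist u v)
    ⟨u, Finset.mem_univ u⟩
  have he_le : G.dist u v0 ≤ G.diam := SimpleGraph.dist_le_diam hnetop
  have he1 : 1 ≤ G.dist u v0 := by
    obtain ⟨b, hb⟩ := exists_ne u
    have h1 : 0 < G.dist u b := hconn.pos_dist_of_ne (Ne.symm hb)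
    have := hmax b (Finset.mem_univ b)
    omega
  have hefull : G.dist u v0 = G.diam := by
    by_contra hne
    have hlt : G.dist u v0 < G.diam := lt_of_le_of_ne he_le hne
    obtain ⟨x, yD, hxy⟩ := SimpleGraph.exists_dist_eq_diam (G := G)
    obtain ⟨y, hy⟩ := my_exists_dist_eq_of_le hconn
      (show G.dist u v0 + 1 ≤ G.dist x yD by omega)
    obtain ⟨y', hadj, hy'⟩ := my_dist_step (hconn x y) hy
    have hDR := hdr.2 (G.dist u v0) he1 (by omega) (G.dist u v0 + 1) (by right; right; rfl)
      u v0 x y' rfl hy'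
    have hL : {w | G.Adj v0 w ∧ G.dist u w = G.dist u v0 + 1} = ∅ := by
      ext z
      simp only [Set.mem_setOf_eq, Set.mem_empty_iff_false, iff_false, not_and]
      intro _
      have := hmax z (Finset.mem_univ z)
      omega
    have hR : y ∈ {w | G.Adj y' w ∧ G.dist x w = G.dist u v0 + 1} := ⟨hadj.symm, hy⟩
    rw [hL, Set.ncard_empty] at hDR
    have hpos := (Set.ncard_pos (Set.toFinite _)).mpr ⟨y, hR⟩
    omega
  exact my_exists_dist_eq_of_le hconn (by omega : k ≤ G.dist u v0)

lemma my_size (hconn : G.Connected) (hnt : Nontrivial V) (hdr : IsDistanceRegular G) :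
    G.diam + 1 < Fintype.card V ∨
      (G.diam + 1 = Fintype.card V ∧ Fintype.card V = 2) := by
  haveI : Nonempty V := hconn.nonempty
  have hnetop := my_ediam_ne_top hconn
  have hdiam1 : 1 ≤ G.diam := my_diam_pos hconn hnt
  have hle : G.diam + 1 ≤ Fintype.card V := by
    obtain ⟨a, b, hab⟩ := SimpleGraph.exists_dist_eq_diam (G := G)
    obtain ⟨p, hpath, hlen⟩ := hconn.exists_path_of_dist a b
    have := hpath.length_lt
    omega
  rcases lt_or_eq_of_le hle with h | heq
  · left; exact h
  · by_cases h2 : Fintype.card V = 2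
    · right; exact ⟨heq, h2⟩
    · exfalso
      have hcard3 : 3 ≤ Fintype.card V := by
        have : 1 < Fintype.card V := Fintype.one_lt_card
        omega
      have hd2 : 2 ≤ G.diam := by omega
      obtain ⟨u⟩ := (inferInstance : Nonempty V)
      set f : V → Fin (Fintype.card V) :=
        fun v => ⟨G.dist u v, by have := SimpleGraph.dist_le_diam (G := G) hnetop (u := u) (v := v); omega⟩
        with hf
      have hsurj : Function.Surjective f := by
        intro k
        obtain ⟨v, hv⟩ := my_ecc hconn hnt hdr u (show (k : ℕ) ≤ G.diam by
          have := k.isLt; omega)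
        exact ⟨v, Fin.ext hv⟩
      have hinj : Function.Injective f :=
        ((Fintype.bijective_iff_surjective_and_card f).mpr ⟨hsurj, by simp⟩).1
      have hdinj : ∀ {a b : V}, G.dist u a = G.dist u b → a = b := by
        intro a b h
        exact hinj (Fin.ext h)
      obtain ⟨w, hw⟩ := my_ecc hconn hnt hdr u (show 1 ≤ G.diam by omega)
      obtain ⟨z, hz⟩ := my_ecc hconn hnt hdr u hd2
      have hadj_uw : G.Adj u w := SimpleGraph.dist_eq_one_iff_adj.mp hw
      have hNu : {x | G.Adj u x} = {w} := by
        ext x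
        simp only [Set.mem_setOf_eq, Set.mem_singleton_iff]
        constructor
        · intro h
          exact hdinj ((SimpleGraph.dist_eq_one_iff_adj.mpr h).trans hw.symm)
        · rintro rfl; exact hadj_uw
      obtain ⟨w', hadjzw', hw'⟩ := my_dist_step (hconn u z) (show G.dist u z = 1 + 1 by omega)
      have hww' : w' = w := hdinj (hw'.trans hw.symm)
      have huz : u ≠ z := by
        intro h
        rw [← h, SimpleGraph.dist_self] at hz
        omega
      have hsub : ({u, z} : Set V) ⊆ {x | G.Adj w x} := by
        rintro x (rfl | rfl)
        · exact hadj_uw.symm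
        · rw [← hww']; exact hadjzw'.symm
      have h2le : 2 ≤ {x | G.Adj w x}.ncard := by
        have hp : ({u, z} : Set V).ncard = 2 := Set.ncard_pair huz
        rw [← hp]
        exact Set.ncard_le_ncard hsub (Set.toFinite _)
      have h1 : {x | G.Adj w x}.ncard = {x | G.Adj u x}.ncard := my_regular hconn hnt hdr w u
      rw [hNu, Set.ncard_singleton] at h1
      omega

lemma my_count_eq (hconn : G.Connected) (hnt : Nontrivial V) (hdr : IsDistanceRegular G)
    {a b a' b' : V} {r : ℕ} (hr : G.dist a b = r) (hr' : G.dist a' b' = r) (s : ℕ) :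
    {z | G.Adj b z ∧ G.dist a z = s}.ncard = {z | G.Adj b' z ∧ G.dist a' z = s}.ncard := by
  have hnetop := my_ediam_ne_top hconn
  rcases Nat.eq_zero_or_pos r with h0 | hpos
  · subst h0
    have hba : b = a := ((hconn.dist_eq_zero_iff).mp hr).symm
    have hba' : b' = a' := ((hconn.dist_eq_zero_iff).mp hr').symm
    subst hba; subst hba'
    by_cases hs : s = 1
    · subst hs
      have hA : ∀ c : V, {z | G.Adj c z ∧ G.dist c z = 1} = {z | G.Adj c z} := by
        intro c
        ext z
        simp only [Set.mem_setOf_eq, and_iff_left_iff_imp]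
        exact fun h => SimpleGraph.dist_eq_one_iff_adj.mpr h
      rw [hA, hA]
      exact my_regular hconn hnt hdr b b'
    · have hE : ∀ c : V, {z | G.Adj c z ∧ G.dist c z = s} = ∅ := by
        intro c
        ext z
        simp only [Set.mem_setOf_eq, Set.mem_empty_iff_false, iff_false, not_and]
        intro h hd
        exact hs ((SimpleGraph.dist_eq_one_iff_adj.mpr h).symm.trans hd).symm
      rw [hE, hE]
  · have hrdiam : r ≤ G.diam := hr ▸ SimpleGraph.dist_le_diam hnetop
    by_cases hs3 : s = r - 1 ∨ s = r ∨ s = r + 1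
    · exact hdr.2 r hpos hrdiam s hs3 a b a' b' hr hr'
    · have hE : ∀ (c d : V), G.dist c d = r → {z | G.Adj d z ∧ G.dist c z = s} = ∅ := by
        intro c d hcd
        ext z
        simp only [Set.mem_setOf_eq, Set.mem_empty_iff_false, iff_false, not_and]
        intro hadj heq
        have t1 : G.dist c z ≤ G.dist c d + G.dist d z := hconn.dist_triangle
        have t2 : G.dist c d ≤ G.dist c z + G.dist z d := hconn.dist_triangle
        have h3 : G.dist d z = 1 := SimpleGraph.dist_eq_one_iff_adj.mpr hadj
        have h4 : G.dist z d = 1 := by rw [SimpleGraph.dist_comm]; exact h3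
        apply hs3
        omega
      rw [hE a b hr, hE a' b' hr']

lemma my_CAM_of_DR (hconn : G.Connected) (hnt : Nontrivial V) (hdr : IsDistanceRegular G) :
    ∃ C : Fin (G.diam + 1) → Fin (G.diam + 1) → ℕ, IsCAM G C := by
  haveI : Nonempty V := hconn.nonempty
  have hnetop := my_ediam_ne_top hconn
  have hdiam1 : 1 ≤ G.diam := my_diam_pos hconn hnt
  obtain ⟨u0⟩ := (inferInstance : Nonempty V)
  have hvb : ∀ j : Fin (G.diam + 1), ∃ v, G.dist u0 v = (j : ℕ) := fun j =>
    my_ecc hconn hnt hdr u0 (by have := j.isLt; omega)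
  choose vb hvb using hvb
  refine ⟨fun i j => {w | G.Adj (vb j) w ∧ G.dist u0 w = (i : ℕ)}.ncard, by omega, ?_, ?_⟩
  · rcases my_size hconn hnt hdr with h | h
    · left; exact h
    · right; exact h
  · intro u
    refine ⟨fun v => ⟨G.dist u v, by
      have := SimpleGraph.dist_le_diam (G := G) hnetop (u := u) (v := v); omega⟩, ?_, ?_, ?_⟩
    · intro v
      simp only
      constructor
      · intro h; exact ((hconn.dist_eq_zero_iff).mp h).symm
      · rintro rfl; exact SimpleGraph.dist_self
    · intro t
      obtain ⟨v, hv⟩ := my_ecc hconn hnt hdr u (show (t : ℕ) ≤ G.diam by have := t.isLt; omega)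
      exact ⟨v, Fin.ext hv⟩
    · intro i j y hy
      have hyd : G.dist u y = (j : ℕ) := congrArg Fin.val hy
      have hseteq : {z : V | (⟨G.dist u z, by
          have := SimpleGraph.dist_le_diam (G := G) hnetop (u := u) (v := z); omega⟩ : Fin (G.diam + 1)) = i
          ∧ G.Adj y z} = {z : V | G.Adj y z ∧ G.dist u z = (i : ℕ)} := by
        ext z
        simp only [Set.mem_setOf_eq, Fin.ext_iff]
        tauto
      rw [hseteq]
      exact my_count_eq hconn hnt hdr hyd (hvb j) (i : ℕ)

end Backward

/-- A connected highly-regular graph has index `diam(Γ) + 1`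
iff it is a distance-regular graph. -/
theorem stmt0 {V : Type*} [Fintype V] (G : SimpleGraph V)
    (hconn : G.Connected) (hhr : IsHighlyRegular G) :
    hrIndex G = G.diam + 1 ↔ IsDistanceRegular G := by
  constructor
  · intro h
    have hS : {m : ℕ | ∃ C : Fin m → Fin m → ℕ, IsCAM G C}.Nonempty := by
      obtain ⟨m, C, hC⟩ := hhr
      exact ⟨m, C, hC⟩
    have hmem := Nat.sInf_mem hS
    rw [show sInf {m : ℕ | ∃ C : Fin m → Fin m → ℕ, IsCAM G C} = hrIndex G from rfl, h] at hmem
    obtain ⟨C, hC⟩ := hmem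
    exact my_DR_of_CAM hconn hC
  · intro hdr
    have hnt : Nontrivial V := by
      obtain ⟨m, C, hC⟩ := hhr
      have h1 := hC.1
      rcases hC.2.1 with h | h
      · exact Fintype.one_lt_card_iff_nontrivial.mp (by omega)
      · exact Fintype.one_lt_card_iff_nontrivial.mp (by omega)
    obtain ⟨C, hC⟩ := my_CAM_of_DR hconn hnt hdr
    have hmem2 : (G.diam + 1) ∈ {m : ℕ | ∃ C : Fin m → Fin m → ℕ, IsCAM G C} := by
      simp only [Set.mem_setOf_eq]
      exact ⟨C, hC⟩
    have hub : hrIndex G ≤ G.diam + 1 := Nat.sInf_le hmem2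
    have hlb : G.diam + 1 ≤ hrIndex G := by
      unfold hrIndex
      refine le_csInf ⟨G.diam + 1, hmem2⟩ ?_
      rintro m' ⟨C', hC'⟩
      exact my_card_lower hconn hC'
    omega
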